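/- Let k be a positive integer and set a = 1 if k is even and a = 2 if k is odd. Let d be an integer such that (i) a·(2k−1)! divides d, and (ii) the rational number (bernoulli(2k) / (2·(2k)!))·d is an integer. Then d is divisible by (2k−1)!·den(bernoulli(2k)/(4k)). (This is the arithmetic core of Lemma 4.1: the divisibility of the middle Pontrjagin class of the orbit space, with d playing the role of the divisibility d(N) and condition (ii) coming from the integrality of the twisted Â-genus.) -/

import Mathlib

lemma den_dvd_of_mul_int (q : ℚ) (e m : ℤ) (h : q * (e : ℚ) = (m : ℚ)) :
    (q.den : ℤ) ∣ e := by
  have hden : (q.den : ℚ) ≠ 0 := by exact_mod_cast q.den_ne_zero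
  have h' : (q.num * e : ℚ) = (m * q.den : ℚ) := by
    rw [← Rat.num_div_den q] at h
    field_simp at h
    push_cast
    linarith
  have h'' : q.num * e = m * q.den := by exact_mod_cast h'
  have hdvd : (q.den : ℤ) ∣ q.num * e := ⟨m, by linarith⟩
  have hcop : IsCoprime (q.den : ℤ) q.num := by
    rw [Int.isCoprime_iff_gcd_eq_one, Int.gcd, Int.natAbs_natCast]
    exact Nat.Coprime.gcd_eq_one q.reduced.symm
  exact hcop.dvd_of_dvd_mul_left hdvd

/-- Arithmetic core of Lemma 4.1: if `a·(2k−1)!` divides `d` (with `a = 1` for `k` even,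
`a = 2` for `k` odd) and `(bernoulli(2k)/(2·(2k)!))·d` is an integer, then
`(2k−1)!·den(bernoulli(2k)/(4k))` divides `d`. -/
theorem stmt_0 (k : ℕ) (hk : 0 < k) (a : ℕ) (ha : a = if Even k then 1 else 2)
    (d : ℤ)
    (h1 : ((a * Nat.factorial (2 * k - 1) : ℕ) : ℤ) ∣ d)
    (h2 : ∃ m : ℤ, bernoulli (2 * k) / (2 * (Nat.factorial (2 * k) : ℚ)) * (d : ℚ) = (m : ℚ)) :
    ((Nat.factorial (2 * k - 1) * (bernoulli (2 * k) / (4 * (k : ℚ))).den : ℕ) : ℤ) ∣ d := by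
  set f : ℕ := Nat.factorial (2 * k - 1) with hf
  have hfd : (f : ℤ) ∣ d := by
    refine dvd_trans ?_ h1
    exact ⟨a, by push_cast; ring⟩
  obtain ⟨e, he⟩ := hfd
  obtain ⟨m, hm⟩ := h2
  have hfact : Nat.factorial (2 * k) = 2 * k * f := by
    have h2k : 2 * k = (2 * k - 1) + 1 := by omega
    rw [hf, h2k, Nat.factorial_succ]
    simp
  have hfQ : (f : ℚ) ≠ 0 := by exact_mod_cast (Nat.factorial_pos _).ne'
  have hkQ : (k : ℚ) ≠ 0 := by exact_mod_cast hk.ne'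
  have key : bernoulli (2 * k) / (4 * (k : ℚ)) * (e : ℚ) = (m : ℚ) := by
    rw [he] at hm
    rw [hfact] at hm
    push_cast at hm ⊢
    field_simp at hm
    rw [div_mul_eq_mul_div, div_eq_iff (by positivity : (4*(k:ℚ)) ≠ 0)]
    exact mul_left_cancel₀ hfQ (by linear_combination (f : ℚ) * hm)
  have hden := den_dvd_of_mul_int _ _ _ key
  rw [he]
  push_cast
  exact mul_dvd_mul_left _ hden
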